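/- There exists a constant C depending only on the dimension n such that the following holds: for every ε ∈ (0,1], every N ∈ ℕ, and every family X₁, …, X_N of independent ℝⁿ-valued random variables with E[|X_j|^{n+1}] < ∞ for all j, one has E[ ∫_{ℝⁿ} (1 + |z|^{n+1}) ( (1/N) Σ_{j=1}^N ( φ_ε(z − X_j) − E[φ_ε(z − X_j)] ) )² dz ] ≤ C ε^{−n} (1 + (1/N) Σ_{j=1}^N E[|X_j|^{n+1}]) / N. -/

import Mathlib

open MeasureTheory ProbabilityTheory

/-- The density of the centered Gaussian measure `𝒩(0, ε² Idₙ)` on `ℝⁿ`. -/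
noncomputable def gaussDensity (n : ℕ) (ε : ℝ) (x : EuclideanSpace ℝ (Fin n)) : ℝ :=
  (2 * Real.pi * ε ^ 2) ^ (-(n : ℝ) / 2) * Real.exp (-‖x‖ ^ 2 / (2 * ε ^ 2))

lemma gaussDensity_nonneg (n : ℕ) (ε : ℝ) (x : EuclideanSpace ℝ (Fin n)) :
    0 ≤ gaussDensity n ε x := by
  unfold gaussDensity
  positivity

lemma gaussDensity_le (n : ℕ) {ε : ℝ} (hε : 0 < ε) (x : EuclideanSpace ℝ (Fin n)) :
    gaussDensity n ε x ≤ (2 * Real.pi * ε ^ 2) ^ (-(n : ℝ) / 2) := by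
  unfold gaussDensity
  have h1 : Real.exp (-‖x‖ ^ 2 / (2 * ε ^ 2)) ≤ 1 := by
    apply Real.exp_le_one_iff.2
    have h2 : (0:ℝ) < 2 * ε ^ 2 := by positivity
    exact div_nonpos_of_nonpos_of_nonneg (neg_nonpos.2 (by positivity)) h2.le
  nlinarith [Real.rpow_nonneg (by positivity : (0:ℝ) ≤ 2 * Real.pi * ε ^ 2) (-(n:ℝ)/2),
    Real.exp_pos (-‖x‖ ^ 2 / (2 * ε ^ 2))]

lemma gaussDensity_continuous (n : ℕ) (ε : ℝ) :
    Continuous (gaussDensity n ε) := by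
  unfold gaussDensity
  fun_prop

lemma pow_mul_exp_bound (k : ℕ) {ε t : ℝ} (hε : 0 < ε) (ht : 0 ≤ t) :
    t ^ k * Real.exp (-(t ^ 2) / (2 * ε ^ 2)) ≤ k.factorial * Real.exp 1 * ε ^ k := by
  set s : ℝ := t / ε with hs
  have hs0 : 0 ≤ s := by positivity
  have hts : t = ε * s := by rw [hs]; field_simp
  have h1 : s ^ k ≤ k.factorial * Real.exp s := by
    have := Real.pow_div_factorial_le_exp (x := s) hs0 k
    rw [div_le_iff₀ (by positivity : (0:ℝ) < (k.factorial : ℝ))] at this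
    linarith [this]
  have h2 : Real.exp (s - s ^ 2 / 2) ≤ Real.exp 1 := by
    apply Real.exp_le_exp.2; nlinarith [sq_nonneg (s - 1)]
  have hexp : Real.exp (-(t ^ 2) / (2 * ε ^ 2)) = Real.exp (-(s ^ 2 / 2)) := by
    congr 1
    rw [hts]; field_simp
  rw [hexp, hts, mul_pow]
  calc ε ^ k * s ^ k * Real.exp (-(s ^ 2 / 2))
      ≤ ε ^ k * (k.factorial * Real.exp s) * Real.exp (-(s ^ 2 / 2)) := by
        apply mul_le_mul_of_nonneg_right _ (Real.exp_pos _).le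
        apply mul_le_mul_of_nonneg_left h1 (by positivity)
    _ = ε ^ k * k.factorial * Real.exp (s - s ^ 2 / 2) := by
        rw [show s - s ^ 2 / 2 = s + -(s ^ 2 / 2) by ring, Real.exp_add]; ring
    _ ≤ ε ^ k * k.factorial * Real.exp 1 := by
        apply mul_le_mul_of_nonneg_left h2 (by positivity)
    _ = k.factorial * Real.exp 1 * ε ^ k := by ring

noncomputable def gaussC (n : ℕ) : ℝ := 2 ^ (n + 1) * ((n + 1).factorial * Real.exp 1 + 1)

lemma gaussC_pos (n : ℕ) : 0 < gaussC n := by unfold gaussC; positivity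

lemma integrable_exp_neg_mul_sq_norm {n : ℕ} {b : ℝ} (hb : 0 < b) :
    Integrable (fun v : EuclideanSpace ℝ (Fin n) => Real.exp (-b * ‖v‖ ^ 2)) := by
  have h := (GaussianFourier.integrable_cexp_neg_mul_sq_norm_add
    (b := (b : ℂ)) (by simpa using hb) 0 (0 : EuclideanSpace ℝ (Fin n))).norm
  refine h.congr (Filter.Eventually.of_forall fun v => ?_)
  simp only [Complex.norm_exp]
  norm_num
  left
  norm_cast

lemma gauss_key (n : ℕ) {ε : ℝ} (hε : 0 < ε) (hε1 : ε ≤ 1) (x : EuclideanSpace ℝ (Fin n)) :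
    ∫⁻ z, ENNReal.ofReal ((1 + ‖z‖ ^ (n + 1)) * gaussDensity n ε (z - x) ^ 2) ≤
      ENNReal.ofReal (gaussC n / ε ^ n * (1 + ‖x‖ ^ (n + 1))) := by
  set b : ℝ := (2 * ε ^ 2)⁻¹ with hbdef
  have hb : 0 < b := by positivity
  set c : ℝ := (2 * Real.pi * ε ^ 2) ^ (-(n : ℝ) / 2) with hcdef
  have hc : 0 < c := by
    apply Real.rpow_pos_of_pos; positivity
  set K : ℝ := (n + 1).factorial * Real.exp 1 with hKdef
  have hK : 1 ≤ K := by
    have h1 : (1:ℝ) ≤ (n + 1).factorial := by exact_mod_cast Nat.one_le_iff_ne_zero.2 (Nat.factorial_ne_zero _)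
    nlinarith [Real.exp_one_gt_d9]
  set B : ℝ := c ^ 2 * (1 + 2 ^ (n + 1) * (K * ε ^ (n + 1) + ‖x‖ ^ (n + 1))) with hBdef
  have hB : 0 ≤ B := by positivity
  -- pointwise bound
  have hpt : ∀ z : EuclideanSpace ℝ (Fin n),
      (1 + ‖z‖ ^ (n + 1)) * gaussDensity n ε (z - x) ^ 2 ≤ B * Real.exp (-b * ‖z - x‖ ^ 2) := by
    intro z
    set y := z - x with hy
    set q : ℝ := Real.exp (-‖y‖ ^ 2 / (2 * ε ^ 2)) with hq
    have hq0 : 0 < q := Real.exp_pos _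
    have hq1 : q ≤ 1 := by
      apply Real.exp_le_one_iff.2
      exact div_nonpos_of_nonpos_of_nonneg (neg_nonpos.2 (by positivity)) (by positivity)
    have hgauss : gaussDensity n ε y = c * q := rfl
    have hexpb : Real.exp (-b * ‖y‖ ^ 2) = q := by
      rw [hq]; congr 1; rw [hbdef]; field_simp
    have hzb : ‖z‖ ^ (n + 1) ≤ 2 ^ (n + 1) * (‖y‖ ^ (n + 1) + ‖x‖ ^ (n + 1)) := by
      have h1 : ‖z‖ ≤ ‖y‖ + ‖x‖ := by
        calc ‖z‖ = ‖y + x‖ := by rw [hy]; congr 1; abel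
          _ ≤ ‖y‖ + ‖x‖ := norm_add_le _ _
      calc ‖z‖ ^ (n + 1) ≤ (‖y‖ + ‖x‖) ^ (n + 1) :=
            pow_le_pow_left₀ (norm_nonneg _) h1 _
        _ ≤ (2 * max ‖y‖ ‖x‖) ^ (n + 1) := by
            apply pow_le_pow_left₀ (by positivity)
            rcases max_cases ‖y‖ ‖x‖ with ⟨h, h'⟩ | ⟨h, h'⟩ <;> rw [h] <;> linarith
        _ = 2 ^ (n + 1) * max ‖y‖ ‖x‖ ^ (n + 1) := mul_pow _ _ _
        _ ≤ 2 ^ (n + 1) * (‖y‖ ^ (n + 1) + ‖x‖ ^ (n + 1)) := by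
            apply mul_le_mul_of_nonneg_left _ (by positivity)
            rcases max_cases ‖y‖ ‖x‖ with ⟨h, h'⟩ | ⟨h, h'⟩ <;> rw [h] <;>
              nlinarith [pow_nonneg (norm_nonneg y) (n+1), pow_nonneg (norm_nonneg x) (n+1)]
    have hyq : ‖y‖ ^ (n + 1) * q ≤ K * ε ^ (n + 1) := by
      rw [hq, hKdef]
      exact pow_mul_exp_bound (n + 1) hε (norm_nonneg y)
    have hgoal : (1 + ‖z‖ ^ (n + 1)) * q ≤ 1 + 2 ^ (n + 1) * (K * ε ^ (n + 1) + ‖x‖ ^ (n + 1)) := by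
      have hx0 : (0:ℝ) ≤ ‖x‖ ^ (n + 1) := by positivity
      have h2p : (0:ℝ) < 2 ^ (n + 1) := by positivity
      nlinarith [mul_le_mul_of_nonneg_right hzb hq0.le,
        mul_le_mul_of_nonneg_left hq1 (mul_nonneg h2p.le hx0)]
    calc (1 + ‖z‖ ^ (n + 1)) * gaussDensity n ε y ^ 2
        = (c ^ 2 * q) * ((1 + ‖z‖ ^ (n + 1)) * q) := by rw [hgauss]; ring
      _ ≤ (c ^ 2 * q) * (1 + 2 ^ (n + 1) * (K * ε ^ (n + 1) + ‖x‖ ^ (n + 1))) := by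
          apply mul_le_mul_of_nonneg_left hgoal (by positivity)
      _ = B * Real.exp (-b * ‖y‖ ^ 2) := by rw [hexpb, hBdef]; ring
  -- integrate the bound
  have hint : Integrable (fun z : EuclideanSpace ℝ (Fin n) =>
      B * Real.exp (-b * ‖z - x‖ ^ 2)) := by
    exact ((integrable_exp_neg_mul_sq_norm hb).comp_sub_right x).const_mul B
  have hval : ∫ z : EuclideanSpace ℝ (Fin n), B * Real.exp (-b * ‖z - x‖ ^ 2) =
      B * (Real.pi / b) ^ ((n : ℝ) / 2) := by
    rw [integral_const_mul]
    rw [integral_sub_right_eq_self (μ := volume)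
      (fun v : EuclideanSpace ℝ (Fin n) => Real.exp (-b * ‖v‖ ^ 2)) x]
    rw [GaussianFourier.integral_rexp_neg_mul_sq_norm hb]
    norm_num [finrank_euclideanSpace_fin]
  calc ∫⁻ z, ENNReal.ofReal ((1 + ‖z‖ ^ (n + 1)) * gaussDensity n ε (z - x) ^ 2)
      ≤ ∫⁻ z, ENNReal.ofReal (B * Real.exp (-b * ‖z - x‖ ^ 2)) := by
        exact lintegral_mono fun z => ENNReal.ofReal_le_ofReal (hpt z)
    _ = ENNReal.ofReal (∫ z : EuclideanSpace ℝ (Fin n), B * Real.exp (-b * ‖z - x‖ ^ 2)) := by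
        rw [ofReal_integral_eq_lintegral_ofReal hint
          (Filter.Eventually.of_forall fun z => by positivity)]
    _ ≤ ENNReal.ofReal (gaussC n / ε ^ n * (1 + ‖x‖ ^ (n + 1))) := by
        apply ENNReal.ofReal_le_ofReal
        rw [hval]
        clear_value b c K B
        have hs : (0:ℝ) < 2 * Real.pi * ε ^ 2 := by positivity
        have hπb : Real.pi / b = 2 * Real.pi * ε ^ 2 := by
          rw [hbdef]; field_simp
        have hc2 : c ^ 2 * (2 * Real.pi * ε ^ 2) ^ ((n : ℝ) / 2) =
            (2 * Real.pi * ε ^ 2) ^ (-(n : ℝ) / 2) := by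
          rw [hcdef, ← Real.rpow_natCast ((2 * Real.pi * ε ^ 2) ^ (-(n:ℝ)/2)) 2,
            ← Real.rpow_mul hs.le, ← Real.rpow_add hs]
          congr 1
          push_cast; ring
        have hsplit : (2 * Real.pi * ε ^ 2) ^ (-(n : ℝ) / 2) =
            (2 * Real.pi) ^ (-(n : ℝ) / 2) * (ε ^ n)⁻¹ := by
          rw [Real.mul_rpow (by positivity) (by positivity)]
          congr 1
          rw [← Real.rpow_natCast ε 2, ← Real.rpow_mul hε.le,
            show ((2:ℕ):ℝ) * (-(n:ℝ)/2) = -(n:ℝ) by push_cast; ring,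
            Real.rpow_neg hε.le, Real.rpow_natCast]
        have h2π : (2 * Real.pi) ^ (-(n : ℝ) / 2) ≤ 1 := by
          apply Real.rpow_le_one_of_one_le_of_nonpos
          · nlinarith [Real.pi_gt_three]
          · have : (0:ℝ) ≤ (n:ℝ) := Nat.cast_nonneg n
            linarith
        have h2π0 : (0:ℝ) ≤ (2 * Real.pi) ^ (-(n : ℝ) / 2) :=
          Real.rpow_nonneg (by positivity) _
        have hεn : (0:ℝ) < (ε ^ n)⁻¹ := by positivity
        have hεn1 : ε ^ (n + 1) ≤ 1 := pow_le_one₀ hε.le hε1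
        have hx0 : (0:ℝ) ≤ ‖x‖ ^ (n + 1) := by positivity
        have h2p : (1:ℝ) ≤ 2 ^ (n + 1) := one_le_pow₀ (by norm_num)
        have hmain : (1 + 2 ^ (n + 1) * (K * ε ^ (n + 1) + ‖x‖ ^ (n + 1))) *
            (2 * Real.pi) ^ (-(n : ℝ) / 2) ≤ gaussC n * (1 + ‖x‖ ^ (n + 1)) := by
          have hC : gaussC n = 2 ^ (n + 1) * (K + 1) := by rw [hKdef, gaussC]
          rw [hC]
          have hK0 : (0:ℝ) ≤ K := le_trans zero_le_one hK
          have hKε : 0 ≤ K * ε ^ (n + 1) := mul_nonneg hK0 (pow_nonneg hε.le _)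
          have hA : (0:ℝ) ≤ 1 + 2 ^ (n + 1) * (K * ε ^ (n + 1) + ‖x‖ ^ (n + 1)) := by
            have h0 : (0:ℝ) ≤ 2 ^ (n + 1) * (K * ε ^ (n + 1) + ‖x‖ ^ (n + 1)) :=
              mul_nonneg (by positivity) (add_nonneg hKε hx0)
            linarith
          have hb1 : (1 + 2 ^ (n + 1) * (K * ε ^ (n + 1) + ‖x‖ ^ (n + 1))) *
              (2 * Real.pi) ^ (-(n : ℝ) / 2) ≤
              1 + 2 ^ (n + 1) * (K * ε ^ (n + 1) + ‖x‖ ^ (n + 1)) :=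
            mul_le_of_le_one_right hA h2π
          have f1 : 2 ^ (n + 1) * (K * ε ^ (n + 1)) ≤ 2 ^ (n + 1) * K :=
            mul_le_mul_of_nonneg_left
              (mul_le_of_le_one_right hK0 hεn1) (by positivity)
          have f2 : (0:ℝ) ≤ 2 ^ (n + 1) * K * ‖x‖ ^ (n + 1) :=
            mul_nonneg (mul_nonneg (by positivity) hK0) hx0
          calc (1 + 2 ^ (n + 1) * (K * ε ^ (n + 1) + ‖x‖ ^ (n + 1))) *
              (2 * Real.pi) ^ (-(n : ℝ) / 2)
              ≤ 1 + 2 ^ (n + 1) * (K * ε ^ (n + 1) + ‖x‖ ^ (n + 1)) := hb1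
            _ ≤ 2 ^ (n + 1) * (K + 1) * (1 + ‖x‖ ^ (n + 1)) := by
                have e1 : 2 ^ (n + 1) * (K + 1) * (1 + ‖x‖ ^ (n + 1)) =
                    2 ^ (n + 1) * K + 2 ^ (n + 1) + 2 ^ (n + 1) * K * ‖x‖ ^ (n + 1) +
                      2 ^ (n + 1) * ‖x‖ ^ (n + 1) := by ring
                have e2 : 1 + 2 ^ (n + 1) * (K * ε ^ (n + 1) + ‖x‖ ^ (n + 1)) =
                    1 + 2 ^ (n + 1) * (K * ε ^ (n + 1)) + 2 ^ (n + 1) * ‖x‖ ^ (n + 1) := by ring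
                rw [e1, e2]
                linarith [f1, f2, h2p]
        calc B * (Real.pi / b) ^ ((n : ℝ) / 2)
            = (1 + 2 ^ (n + 1) * (K * ε ^ (n + 1) + ‖x‖ ^ (n + 1))) *
              ((2 * Real.pi) ^ (-(n : ℝ) / 2) * (ε ^ n)⁻¹) := by
              rw [hπb, hBdef, ← hsplit, ← hc2]; ring
          _ ≤ gaussC n * (1 + ‖x‖ ^ (n + 1)) * (ε ^ n)⁻¹ := by
              rw [← mul_assoc]
              exact mul_le_mul_of_nonneg_right hmain hεn.le
          _ = gaussC n / ε ^ n * (1 + ‖x‖ ^ (n + 1)) := by ring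

lemma var_step {Ω : Type} [MeasurableSpace Ω] (P : Measure Ω) [IsProbabilityMeasure P]
    {N : ℕ} (g : Fin N → Ω → ℝ) (hgm : ∀ j, Measurable (g j)) (C : ℝ)
    (hgb : ∀ j ω, g j ω ∈ Set.Icc 0 C)
    (hind : Set.Pairwise Set.univ fun i j => IndepFun (g i) (g j) P) :
    ∫⁻ ω, ENNReal.ofReal (((N : ℝ)⁻¹ * ∑ j, (g j ω - ∫ ω', g j ω' ∂P)) ^ 2) ∂P ≤
      ENNReal.ofReal ((N : ℝ)⁻¹ ^ 2 * ∑ j, ∫ ω, (g j ω) ^ 2 ∂P) := by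
  have hgℒ : ∀ j, MemLp (g j) 2 P := fun j =>
    memLp_of_bounded (Filter.Eventually.of_forall (hgb j)) (hgm j).aestronglyMeasurable 2
  set Y : Fin N → Ω → ℝ := fun j => g j - fun _ => ∫ ω', g j ω' ∂P with hYdef
  have hYℒ : ∀ j, MemLp (Y j) 2 P := fun j => (hgℒ j).sub (memLp_const _)
  have hYint : ∀ j, ∫ ω, Y j ω ∂P = 0 := by
    intro j
    have : Integrable (g j) P := (hgℒ j).integrable one_le_two
    simp [hYdef, integral_sub this (integrable_const _)]
  have hSℒ : MemLp (∑ j, Y j) 2 P := memLp_finset_sum' _ fun j _ => hYℒ j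
  have hSint : ∫ ω, (∑ j, Y j) ω ∂P = 0 := by
    simp only [Finset.sum_apply]
    rw [integral_finset_sum _ fun j _ => (hYℒ j).integrable one_le_two]
    simp [hYint]
  -- independence of the Y's
  have hYind : Set.Pairwise (Set.univ : Set (Fin N)) fun i j => IndepFun (Y i) (Y j) P := by
    intro i _ j _ hij
    have h := hind (Set.mem_univ i) (Set.mem_univ j) hij
    exact h.comp (measurable_id.sub measurable_const) (measurable_id.sub measurable_const)
  have hvar : variance (∑ j, Y j) P = ∑ j, variance (Y j) P :=
    IndepFun.variance_sum (fun j _ => hYℒ j) (by simpa using hYind)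
  have hvarle : ∀ j, variance (Y j) P ≤ ∫ ω, (g j ω) ^ 2 ∂P := by
    intro j
    calc variance (Y j) P = variance (g j) P := by
          rw [variance_of_integral_eq_zero (hYℒ j).aemeasurable (hYint j),
            variance_eq_integral (hgℒ j).aemeasurable]
          rfl
      _ ≤ ∫ ω, (g j ω) ^ 2 ∂P := variance_le_expectation_sq (hgℒ j).aestronglyMeasurable
  have hS2 : ∫ ω, ((∑ j, Y j) ω) ^ 2 ∂P = variance (∑ j, Y j) P := by
    rw [variance_of_integral_eq_zero hSℒ.aemeasurable hSint]
  have hintS2 : Integrable (fun ω => (((N : ℝ)⁻¹ * ∑ j, (g j ω - ∫ ω', g j ω' ∂P)) ^ 2)) P := by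
    have h1 : Integrable (fun ω => ((∑ j, Y j) ω) ^ 2) P := by
      simpa [sq] using hSℒ.integrable_sq
    have h2 := h1.const_mul ((N : ℝ)⁻¹ ^ 2)
    refine h2.congr (Filter.Eventually.of_forall fun ω => ?_)
    simp only [Finset.sum_apply, Pi.sub_apply, hYdef]
    ring
  rw [← ofReal_integral_eq_lintegral_ofReal hintS2
    (Filter.Eventually.of_forall fun ω => sq_nonneg _)]
  apply ENNReal.ofReal_le_ofReal
  have heq : ∫ ω, (((N : ℝ)⁻¹ * ∑ j, (g j ω - ∫ ω', g j ω' ∂P)) ^ 2) ∂P =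
      (N : ℝ)⁻¹ ^ 2 * ∫ ω, ((∑ j, Y j) ω) ^ 2 ∂P := by
    rw [← integral_const_mul]
    congr 1
    ext ω
    simp only [Finset.sum_apply, Pi.sub_apply, hYdef]
    ring
  rw [heq, hS2, hvar]
  apply mul_le_mul_of_nonneg_left _ (by positivity)
  exact Finset.sum_le_sum fun j _ => hvarle j

/-- There is a constant `C = C(n)` such that for every `ε ∈ (0,1]`, every
`N`, and all independent `ℝⁿ`-valued random variables `X₁, …, X_N` with finite `(n+1)`-th
moments,
`E[∫ (1 + |z|^{n+1}) ((1/N) Σ_j (φ_ε(z − X_j) − E φ_ε(z − X_j)))² dz]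
  ≤ C ε^{−n} (1 + (1/N) Σ_j E[|X_j|^{n+1}]) / N`. -/
theorem empirical_gaussian_density_fluctuation_bound (n : ℕ) :
    ∃ C : ℝ, 0 < C ∧
      ∀ (ε : ℝ), ε ∈ Set.Ioc (0 : ℝ) 1 →
      ∀ (N : ℕ) (Ω : Type) [MeasurableSpace Ω] (P : Measure Ω) [IsProbabilityMeasure P]
        (X : Fin N → Ω → EuclideanSpace ℝ (Fin n)),
        (∀ j, Measurable (X j)) →
        (∀ j, Integrable (fun ω => ‖X j ω‖ ^ (n + 1)) P) →
        iIndepFun X P →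
        (∫⁻ ω, (∫⁻ z, ENNReal.ofReal ((1 + ‖z‖ ^ (n + 1)) *
            ((N : ℝ)⁻¹ * ∑ j, (gaussDensity n ε (z - X j ω) -
              ∫ ω', gaussDensity n ε (z - X j ω') ∂P)) ^ 2)) ∂P) ≤
          ENNReal.ofReal
            (C / ε ^ n * (1 + (N : ℝ)⁻¹ * ∑ j, ∫ ω, ‖X j ω‖ ^ (n + 1) ∂P) / N) := by
  refine ⟨gaussC n, gaussC_pos n, ?_⟩
  rintro ε ⟨hε0, hε1⟩ N Ω _ P _ X hXm hXint hXind
  rcases Nat.eq_zero_or_pos N with rfl | hN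
  · simp
  have hNR : (0:ℝ) < N := by exact_mod_cast hN
  have hgc : Continuous (gaussDensity n ε) := gaussDensity_continuous n ε
  -- measurability of the mean function
  have hmz : ∀ j, Measurable (fun z : EuclideanSpace ℝ (Fin n) =>
      ∫ ω', gaussDensity n ε (z - X j ω') ∂P) := by
    intro j
    have hf : StronglyMeasurable (fun p : EuclideanSpace ℝ (Fin n) × Ω =>
        gaussDensity n ε (p.1 - X j p.2)) :=
      Measurable.stronglyMeasurable (by
        exact hgc.measurable.comp (measurable_fst.sub ((hXm j).comp measurable_snd)))
    exact hf.integral_prod_right'.measurable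
  -- measurability of the second-moment function
  have hIm : ∀ j, Measurable (fun z : EuclideanSpace ℝ (Fin n) =>
      ∫ ω, gaussDensity n ε (z - X j ω) ^ 2 ∂P) := by
    intro j
    have hf : StronglyMeasurable (fun p : EuclideanSpace ℝ (Fin n) × Ω =>
        gaussDensity n ε (p.1 - X j p.2) ^ 2) :=
      Measurable.stronglyMeasurable (by
        exact (hgc.measurable.comp
          (measurable_fst.sub ((hXm j).comp measurable_snd))).pow_const 2)
    exact hf.integral_prod_right'.measurable
  -- joint measurability of the main integrand
  have hFmeas : Measurable (fun p : Ω × EuclideanSpace ℝ (Fin n) =>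
      ENNReal.ofReal ((1 + ‖p.2‖ ^ (n + 1)) *
        ((N : ℝ)⁻¹ * ∑ j, (gaussDensity n ε (p.2 - X j p.1) -
          ∫ ω', gaussDensity n ε (p.2 - X j ω') ∂P)) ^ 2)) := by
    apply ENNReal.measurable_ofReal.comp
    apply Measurable.mul
    · exact measurable_const.add (measurable_snd.norm.pow_const _)
    · apply Measurable.pow_const
      apply Measurable.const_mul
      apply Finset.measurable_sum
      intro j _
      have h1 : Measurable (fun p : Ω × EuclideanSpace ℝ (Fin n) =>
          gaussDensity n ε (p.2 - X j p.1)) := by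
        exact hgc.measurable.comp (measurable_snd.sub ((hXm j).comp measurable_fst))
      exact h1.sub ((hmz j).comp measurable_snd)
  -- Step 1: swap the integrals
  rw [lintegral_lintegral_swap hFmeas.aemeasurable]
  -- Step 2: variance bound at fixed z
  have hstep2 : ∀ z : EuclideanSpace ℝ (Fin n),
      ∫⁻ ω, ENNReal.ofReal ((1 + ‖z‖ ^ (n + 1)) *
        ((N : ℝ)⁻¹ * ∑ j, (gaussDensity n ε (z - X j ω) -
          ∫ ω', gaussDensity n ε (z - X j ω') ∂P)) ^ 2) ∂P ≤
      ENNReal.ofReal ((1 + ‖z‖ ^ (n + 1)) *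
        ((N : ℝ)⁻¹ ^ 2 * ∑ j, ∫ ω, gaussDensity n ε (z - X j ω) ^ 2 ∂P)) := by
    intro z
    have h1z : (0:ℝ) ≤ 1 + ‖z‖ ^ (n + 1) := by positivity
    have hgm : ∀ j, Measurable (fun ω => gaussDensity n ε (z - X j ω)) := fun j => by
      exact hgc.measurable.comp (measurable_const.sub (hXm j))
    have hgb : ∀ j ω, gaussDensity n ε (z - X j ω) ∈
        Set.Icc 0 ((2 * Real.pi * ε ^ 2) ^ (-(n : ℝ) / 2)) := fun j ω =>
      ⟨gaussDensity_nonneg n ε _, gaussDensity_le n hε0 _⟩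
    have hind : Set.Pairwise (Set.univ : Set (Fin N))
        (fun i j => IndepFun (fun ω => gaussDensity n ε (z - X i ω))
          (fun ω => gaussDensity n ε (z - X j ω)) P) := by
      intro i _ j _ hij
      have hφ : Measurable (fun x : EuclideanSpace ℝ (Fin n) => gaussDensity n ε (z - x)) := by
        exact hgc.measurable.comp (measurable_const.sub measurable_id)
      exact (hXind.indepFun hij).comp hφ hφ
    calc ∫⁻ ω, ENNReal.ofReal ((1 + ‖z‖ ^ (n + 1)) *
          ((N : ℝ)⁻¹ * ∑ j, (gaussDensity n ε (z - X j ω) -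
            ∫ ω', gaussDensity n ε (z - X j ω') ∂P)) ^ 2) ∂P
        = ENNReal.ofReal (1 + ‖z‖ ^ (n + 1)) *
          ∫⁻ ω, ENNReal.ofReal (((N : ℝ)⁻¹ * ∑ j, (gaussDensity n ε (z - X j ω) -
            ∫ ω', gaussDensity n ε (z - X j ω') ∂P)) ^ 2) ∂P := by
          simp_rw [ENNReal.ofReal_mul h1z]
          rw [lintegral_const_mul' _ _ ENNReal.ofReal_ne_top]
      _ ≤ ENNReal.ofReal (1 + ‖z‖ ^ (n + 1)) *
          ENNReal.ofReal ((N : ℝ)⁻¹ ^ 2 *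
            ∑ j, ∫ ω, gaussDensity n ε (z - X j ω) ^ 2 ∂P) := by
          apply mul_le_mul_right
          exact var_step P (fun j ω => gaussDensity n ε (z - X j ω)) hgm _ hgb hind
      _ = ENNReal.ofReal ((1 + ‖z‖ ^ (n + 1)) *
          ((N : ℝ)⁻¹ ^ 2 * ∑ j, ∫ ω, gaussDensity n ε (z - X j ω) ^ 2 ∂P)) :=
          (ENNReal.ofReal_mul h1z).symm
  have hInonneg : ∀ (j : Fin N) (z : EuclideanSpace ℝ (Fin n)),
      0 ≤ ∫ ω, gaussDensity n ε (z - X j ω) ^ 2 ∂P := fun j z =>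
    integral_nonneg fun ω => sq_nonneg _
  have hM0 : ∀ j : Fin N, 0 ≤ ∫ ω, ‖X j ω‖ ^ (n + 1) ∂P := fun j =>
    integral_nonneg fun ω => by positivity
  have hD0 : (0:ℝ) ≤ gaussC n / ε ^ n := div_nonneg (gaussC_pos n).le (by positivity)
  -- Step 4: per-index Gaussian moment bound
  have hstep4 : ∀ j : Fin N, (∫⁻ z, ENNReal.ofReal ((1 + ‖z‖ ^ (n + 1)) *
      ∫ ω, gaussDensity n ε (z - X j ω) ^ 2 ∂P)) ≤
      ENNReal.ofReal (gaussC n / ε ^ n * (1 + ∫ ω, ‖X j ω‖ ^ (n + 1) ∂P)) := by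
    intro j
    have hg2int : ∀ z : EuclideanSpace ℝ (Fin n), Integrable
        (fun ω => (1 + ‖z‖ ^ (n + 1)) * gaussDensity n ε (z - X j ω) ^ 2) P := by
      intro z
      apply Integrable.const_mul
      apply memLp_one_iff_integrable.1
      apply memLp_of_bounded (a := 0) (b := ((2 * Real.pi * ε ^ 2) ^ (-(n : ℝ) / 2)) ^ 2)
      · exact Filter.Eventually.of_forall fun ω => ⟨sq_nonneg _,
          pow_le_pow_left₀ (gaussDensity_nonneg n ε _) (gaussDensity_le n hε0 _) 2⟩
      · exact (Measurable.stronglyMeasurable (by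
          exact (hgc.measurable.comp
            (measurable_const.sub (hXm j))).pow_const 2)).aestronglyMeasurable
    have heqz : ∀ z : EuclideanSpace ℝ (Fin n), ENNReal.ofReal ((1 + ‖z‖ ^ (n + 1)) *
        ∫ ω, gaussDensity n ε (z - X j ω) ^ 2 ∂P) =
        ∫⁻ ω, ENNReal.ofReal ((1 + ‖z‖ ^ (n + 1)) *
          gaussDensity n ε (z - X j ω) ^ 2) ∂P := by
      intro z
      rw [← integral_const_mul]
      exact ofReal_integral_eq_lintegral_ofReal (hg2int z)
        (Filter.Eventually.of_forall fun ω =>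
          mul_nonneg (by positivity) (sq_nonneg _))
    calc (∫⁻ z, ENNReal.ofReal ((1 + ‖z‖ ^ (n + 1)) *
          ∫ ω, gaussDensity n ε (z - X j ω) ^ 2 ∂P))
        = ∫⁻ z, ∫⁻ ω, ENNReal.ofReal ((1 + ‖z‖ ^ (n + 1)) *
            gaussDensity n ε (z - X j ω) ^ 2) ∂P := lintegral_congr heqz
      _ = ∫⁻ ω, (∫⁻ z, ENNReal.ofReal ((1 + ‖z‖ ^ (n + 1)) *
            gaussDensity n ε (z - X j ω) ^ 2)) ∂P := by
          apply lintegral_lintegral_swap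
          apply Measurable.aemeasurable
          apply ENNReal.measurable_ofReal.comp
          exact (measurable_const.add (measurable_fst.norm.pow_const _)).mul
            ((hgc.measurable.comp
              (measurable_fst.sub ((hXm j).comp measurable_snd))).pow_const 2)
      _ ≤ ∫⁻ ω, ENNReal.ofReal (gaussC n / ε ^ n * (1 + ‖X j ω‖ ^ (n + 1))) ∂P :=
          lintegral_mono fun ω => gauss_key n hε0 hε1 (X j ω)
      _ = ENNReal.ofReal (∫ ω, gaussC n / ε ^ n * (1 + ‖X j ω‖ ^ (n + 1)) ∂P) :=
          (ofReal_integral_eq_lintegral_ofReal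
            (((integrable_const (1:ℝ)).add (hXint j)).const_mul _)
            (Filter.Eventually.of_forall fun ω => by
              show (0:ℝ) ≤ gaussC n / ε ^ n * (1 + ‖X j ω‖ ^ (n + 1))
              exact mul_nonneg hD0 (by positivity))).symm
      _ = ENNReal.ofReal (gaussC n / ε ^ n * (1 + ∫ ω, ‖X j ω‖ ^ (n + 1) ∂P)) := by
          rw [integral_const_mul, integral_add (integrable_const 1) (hXint j), integral_const]
          simp
  -- assemble everything
  calc (∫⁻ z, ∫⁻ ω, ENNReal.ofReal ((1 + ‖z‖ ^ (n + 1)) *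
        ((N : ℝ)⁻¹ * ∑ j, (gaussDensity n ε (z - X j ω) -
          ∫ ω', gaussDensity n ε (z - X j ω') ∂P)) ^ 2) ∂P)
      ≤ ∫⁻ z, ENNReal.ofReal ((1 + ‖z‖ ^ (n + 1)) *
          ((N : ℝ)⁻¹ ^ 2 * ∑ j, ∫ ω, gaussDensity n ε (z - X j ω) ^ 2 ∂P)) :=
        lintegral_mono hstep2
    _ = ∫⁻ z, (ENNReal.ofReal ((N : ℝ)⁻¹ ^ 2) * ∑ j, ENNReal.ofReal ((1 + ‖z‖ ^ (n + 1)) *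
          ∫ ω, gaussDensity n ε (z - X j ω) ^ 2 ∂P)) := by
        apply lintegral_congr
        intro z
        have h1z : (0:ℝ) ≤ 1 + ‖z‖ ^ (n + 1) := by positivity
        have h1 : (1 + ‖z‖ ^ (n + 1)) *
            ((N : ℝ)⁻¹ ^ 2 * ∑ j, ∫ ω, gaussDensity n ε (z - X j ω) ^ 2 ∂P) =
            (N : ℝ)⁻¹ ^ 2 * ((1 + ‖z‖ ^ (n + 1)) *
              ∑ j, ∫ ω, gaussDensity n ε (z - X j ω) ^ 2 ∂P) := by ring
        rw [h1, Finset.mul_sum, ENNReal.ofReal_mul (by positivity),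
          ENNReal.ofReal_sum_of_nonneg (fun j _ => mul_nonneg h1z (hInonneg j z))]
    _ = ENNReal.ofReal ((N : ℝ)⁻¹ ^ 2) * ∑ j, ∫⁻ z, ENNReal.ofReal ((1 + ‖z‖ ^ (n + 1)) *
          ∫ ω, gaussDensity n ε (z - X j ω) ^ 2 ∂P) := by
        rw [lintegral_const_mul' _ _ ENNReal.ofReal_ne_top]
        congr 1
        apply lintegral_finset_sum
        intro j _
        exact ENNReal.measurable_ofReal.comp
          ((measurable_const.add (measurable_norm.pow_const _)).mul (hIm j))
    _ ≤ ENNReal.ofReal ((N : ℝ)⁻¹ ^ 2) * ∑ j, ENNReal.ofReal (gaussC n / ε ^ n *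
          (1 + ∫ ω, ‖X j ω‖ ^ (n + 1) ∂P)) :=
        mul_le_mul_right (Finset.sum_le_sum fun j _ => hstep4 j) _
    _ = ENNReal.ofReal (gaussC n / ε ^ n *
          (1 + (N : ℝ)⁻¹ * ∑ j, ∫ ω, ‖X j ω‖ ^ (n + 1) ∂P) / N) := by
        rw [← ENNReal.ofReal_sum_of_nonneg
          (fun j _ => mul_nonneg hD0 (by linarith [hM0 j])),
          ← ENNReal.ofReal_mul (by positivity)]
        congr 1
        have hMsum : ∑ j : Fin N, gaussC n / ε ^ n * (1 + ∫ ω, ‖X j ω‖ ^ (n + 1) ∂P) =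
            gaussC n / ε ^ n * ((N : ℝ) + ∑ j, ∫ ω, ‖X j ω‖ ^ (n + 1) ∂P) := by
          rw [← Finset.mul_sum, Finset.sum_add_distrib, Finset.sum_const, Finset.card_univ,
            Fintype.card_fin, nsmul_eq_mul, mul_one]
        rw [hMsum]
        have hNe : (N:ℝ) ≠ 0 := ne_of_gt hNR
        field_simp [hNe]
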